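/- For all real p, q ≥ 0, the supremum over α, γ ∈ ℝ of √(p·|cos α · cos γ|) + √(q·|sin α · sin γ|) equals √(p + q), and it is attained. -/

import Mathlib

lemma aux_cs (p q a b : ℝ) (hp : 0 ≤ p) (hq : 0 ≤ q) (ha : 0 ≤ a) (hb : 0 ≤ b)
    (hab : a + b ≤ 1) :
    Real.sqrt (p * a) + Real.sqrt (q * b) ≤ Real.sqrt (p + q) := by
  rw [Real.sqrt_mul hp, Real.sqrt_mul hq]
  rw [show Real.sqrt (p+q) = Real.sqrt (p+q) from rfl]
  have h1 := Real.sq_sqrt hp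
  have h2 := Real.sq_sqrt hq
  have h3 := Real.sq_sqrt ha
  have h4 := Real.sq_sqrt hb
  have h5 := Real.sq_sqrt (add_nonneg hp hq)
  have n1 := Real.sqrt_nonneg p
  have n2 := Real.sqrt_nonneg q
  have n3 := Real.sqrt_nonneg a
  have n4 := Real.sqrt_nonneg b
  have n5 := Real.sqrt_nonneg (p+q)
  nlinarith [sq_nonneg (Real.sqrt p * Real.sqrt b - Real.sqrt q * Real.sqrt a),
    sq_nonneg (Real.sqrt p * Real.sqrt a + Real.sqrt q * Real.sqrt b - Real.sqrt (p+q)),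
    sq_nonneg (Real.sqrt p * Real.sqrt a + Real.sqrt q * Real.sqrt b + Real.sqrt (p+q)),
    mul_nonneg (mul_nonneg n1 n3) (mul_nonneg n2 n4)]

/-- For p, q ≥ 0, the supremum over α, γ ∈ ℝ of
    √(p·|cos α · cos γ|) + √(q·|sin α · sin γ|) equals √(p + q), attained. -/
theorem sup_sqrt_cos_sin_combination (p q : ℝ) (hp : 0 ≤ p) (hq : 0 ≤ q) :
    IsGreatest
      { x : ℝ | ∃ α γ : ℝ,
          x = Real.sqrt (p * |Real.cos α * Real.cos γ|)
            + Real.sqrt (q * |Real.sin α * Real.sin γ|) }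
      (Real.sqrt (p + q)) := by
  constructor
  · -- membership
    rcases eq_or_lt_of_le (add_nonneg hp hq) with h | h
    · have hp0 : p = 0 := by linarith
      have hq0 : q = 0 := by linarith
      exact ⟨0, 0, by simp [hp0, hq0, ← h]⟩
    · set s := p + q with hs
      have hs0 : 0 < s := h
      set t := Real.sqrt (p / s) with ht
      have ht1 : t ≤ 1 := by
        rw [ht]
        rw [show (1:ℝ) = Real.sqrt 1 by simp]
        apply Real.sqrt_le_sqrt
        rw [div_le_one hs0]; linarith
      have ht0 : 0 ≤ t := Real.sqrt_nonneg _
      refine ⟨Real.arccos t, Real.arccos t, ?_⟩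
      rw [Real.cos_arccos (by linarith) ht1, Real.sin_arccos]
      have htsq : t ^ 2 = p / s := Real.sq_sqrt (div_nonneg hp hs0.le)
      have h1 : |t * t| = p / s := by
        rw [abs_of_nonneg (mul_nonneg ht0 ht0), ← sq, htsq]
      have hsin : Real.sqrt (1 - t ^ 2) * Real.sqrt (1 - t ^ 2) = q / s := by
        rw [Real.mul_self_sqrt (by nlinarith : (0:ℝ) ≤ 1 - t ^ 2), htsq]
        field_simp
        ring
      have h2 : |Real.sqrt (1 - t ^ 2) * Real.sqrt (1 - t ^ 2)| = q / s := by
        rw [abs_of_nonneg (mul_nonneg (Real.sqrt_nonneg _) (Real.sqrt_nonneg _)), hsin]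
      rw [h1, h2]
      rw [show p * (p / s) = p ^ 2 / s by ring, show q * (q / s) = q ^ 2 / s by ring]
      rw [Real.sqrt_div (sq_nonneg p), Real.sqrt_div (sq_nonneg q),
        Real.sqrt_sq hp, Real.sqrt_sq hq]
      rw [← add_div, Real.div_sqrt]
  · rintro x ⟨α, γ, rfl⟩
    apply aux_cs p q _ _ hp hq (abs_nonneg _) (abs_nonneg _)
    have hA := Real.sin_sq_add_cos_sq α
    have hG := Real.sin_sq_add_cos_sq γ
    rw [abs_mul, abs_mul]
    nlinarith [sq_nonneg (|Real.cos α| - |Real.cos γ|), sq_nonneg (|Real.sin α| - |Real.sin γ|),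
      sq_abs (Real.cos α), sq_abs (Real.cos γ), sq_abs (Real.sin α), sq_abs (Real.sin γ)]
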